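/- Let k ≥ 2 be an integer and let G be the headless thin spider S_t[k] (on 2k vertices). Then the characteristic polynomial of the Laplacian matrix L(G) equals X · (X − 2) · (X² − (k+2)X + k)^{k−1}. Equivalently, the Laplacian eigenvalues of G are (k+2 ± √(k²+4))/2 each with multiplicity k−1, together with the simple eigenvalues 0 and 2. -/

import Mathlib

open SimpleGraph Polynomial

/-- Relation generating the edges of the headless thin spider `S_t[k]` on `2k`
vertices: body `C = inl` is a clique, legs `S = inr` form an independent set, and
`sᵢ` is adjacent to `cₘ` iff `i = m`. -/
def headlessThinSpiderRel (k : ℕ) : (Fin k ⊕ Fin k) → (Fin k ⊕ Fin k) → Prop := fun u v =>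
  (∃ i m : Fin k, u = Sum.inl i ∧ v = Sum.inl m) ∨
  (∃ i : Fin k, u = Sum.inl i ∧ v = Sum.inr i)

/-- The headless thin spider `S_t[k]`. -/
def headlessThinSpider (k : ℕ) : SimpleGraph (Fin k ⊕ Fin k) :=
  SimpleGraph.fromRel (headlessThinSpiderRel k)

instance (k : ℕ) : DecidableRel (headlessThinSpiderRel k) := fun u v => by
  unfold headlessThinSpiderRel; infer_instance

instance (k : ℕ) : DecidableRel (headlessThinSpider k).Adj := fun u v =>
  inferInstanceAs (Decidable (u ≠ v ∧ (headlessThinSpiderRel k u v ∨ headlessThinSpiderRel k v u)))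

open Matrix
variable {k : ℕ}

lemma adj_ll (i j : Fin k) : (headlessThinSpider k).Adj (.inl i) (.inl j) ↔ i ≠ j := by
  simp [headlessThinSpider, headlessThinSpiderRel, eq_comm]

lemma adj_lr (i j : Fin k) : (headlessThinSpider k).Adj (.inl i) (.inr j) ↔ i = j := by
  simp [headlessThinSpider, headlessThinSpiderRel, eq_comm]

lemma adj_rl (i j : Fin k) : (headlessThinSpider k).Adj (.inr i) (.inl j) ↔ j = i := by
  simp [headlessThinSpider, headlessThinSpiderRel, eq_comm]

lemma adj_rr (i j : Fin k) : ¬ (headlessThinSpider k).Adj (.inr i) (.inr j) := by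
  simp [headlessThinSpider, headlessThinSpiderRel, eq_comm]

lemma deg_l (i : Fin k) : (headlessThinSpider k).degree (.inl i) = k := by
  have : (headlessThinSpider k).neighborFinset (.inl i) =
      insert (Sum.inr i) ((Finset.univ.erase i).image Sum.inl) := by
    ext (u|u) <;> simp [adj_ll, adj_lr, eq_comm]
  rw [← card_neighborFinset_eq_degree, this, Finset.card_insert_of_notMem (by simp),
    Finset.card_image_of_injective _ Sum.inl_injective,
    Finset.card_erase_of_mem (Finset.mem_univ i)]
  simp only [Finset.card_univ, Fintype.card_fin]
  have := i.pos
  omega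

lemma deg_r (i : Fin k) : (headlessThinSpider k).degree (.inr i) = 1 := by
  have : (headlessThinSpider k).neighborFinset (.inr i) = {Sum.inl i} := by
    ext (u|u) <;> simp [adj_rl, adj_rr]
  rw [← card_neighborFinset_eq_degree, this, Finset.card_singleton]

def allOnes : Matrix (Fin k) (Fin k) ℝ := Matrix.of fun _ _ => 1

lemma lap_eq (hk : 1 ≤ k) : (headlessThinSpider k).lapMatrix ℝ =
    Matrix.fromBlocks (((k : ℝ) + 1) • 1 - allOnes) (-1) (-1) 1 := by
  ext (i|i) (j|j)
  · by_cases h : i = j <;>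
      simp [lapMatrix, degMatrix, adjMatrix, allOnes, h, adj_ll, Matrix.one_apply, deg_l,
        Matrix.diagonal, Matrix.smul_apply]
  · by_cases h : i = j <;>
      simp [lapMatrix, degMatrix, adjMatrix, h, adj_lr, Matrix.one_apply, Matrix.diagonal]
  · by_cases h : i = j <;>
      simp [lapMatrix, degMatrix, adjMatrix, h, adj_rl, Matrix.one_apply, Matrix.diagonal, eq_comm]
  · by_cases h : i = j <;>
      simp [lapMatrix, degMatrix, adjMatrix, h, adj_rr, Matrix.one_apply, Matrix.diagonal, deg_r]

lemma det_smul_one_add_allOnes {F : Type*} [Field F] {n : ℕ} (hn : 2 ≤ n) (a : F) :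
    Matrix.det (a • (1 : Matrix (Fin n) (Fin n) F) + Matrix.of (fun _ _ => (1 : F))) =
      (a + n) * a ^ (n - 1) := by
  by_cases ha : a = 0
  · subst ha
    rw [zero_smul, zero_add]
    have : Matrix.det (Matrix.of (fun _ _ => (1 : F)) : Matrix (Fin n) (Fin n) F) = 0 := by
      apply Matrix.det_zero_of_row_eq (i := ⟨0, by omega⟩) (j := ⟨1, by omega⟩)
      · simp [Fin.ext_iff]
      · rfl
    rw [this, zero_pow (by omega), mul_zero]
  · have h1 : a • (1 : Matrix (Fin n) (Fin n) F) + Matrix.of (fun _ _ => (1 : F)) =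
        a • (1 + Matrix.replicateCol (Fin 1) (fun _ => a⁻¹) * Matrix.replicateRow (Fin 1) (fun _ => (1 : F))) := by
      ext i j
      simp [Matrix.mul_apply, Matrix.one_apply, Matrix.smul_apply, mul_add,
        mul_inv_cancel₀ ha, Matrix.replicateCol, Matrix.replicateRow]
    rw [h1, Matrix.det_smul]
    erw [Matrix.det_one_add_replicateCol_mul_replicateRow (ι := Fin 1)]
    simp only [dotProduct, Fintype.card_fin, Finset.sum_const, Finset.card_univ,
      one_mul, nsmul_eq_mul]
    have hn' : a ^ n = a ^ (n - 1) * a := by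
      rw [← pow_succ]; congr 1; omega
    rw [hn']
    field_simp

lemma aux_pow {F : Type*} [CommRing F] (u v w : F) {n : ℕ} (hn : 1 ≤ n) :
    u ^ n * (v * w ^ (n - 1)) = (u * v) * (u * w) ^ (n - 1) := by
  obtain ⟨m, rfl⟩ := Nat.exists_eq_add_of_le hn
  simp only [Nat.add_sub_cancel_left, pow_add, pow_one, mul_pow]
  ring


set_option synthInstance.maxHeartbeats 1000000 in
set_option maxHeartbeats 1000000 in
/-- The characteristic polynomial of the Laplacian matrix of the headless thin
spider `S_t[k]`, `k ≥ 2`. -/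
theorem headlessThinSpider_lapMatrix_charpoly (k : ℕ) (hk : 2 ≤ k) :
    ((headlessThinSpider k).lapMatrix ℝ).charpoly =
      X * (X - C (2 : ℝ)) * (X ^ 2 - C ((k : ℝ) + 2) * X + C (k : ℝ)) ^ (k - 1) := by
  set φ : ℝ[X] →+* RatFunc ℝ := (algebraMap ℝ[X] (RatFunc ℝ) : ℝ[X] →+* RatFunc ℝ) with hφ
  apply RatFunc.algebraMap_injective ℝ
  show φ _ = φ _
  set x : RatFunc ℝ := φ X with hx
  have hx1 : x - 1 ≠ 0 := by
    intro h
    have h0 : φ (X - 1 : ℝ[X]) = φ 0 := by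
      rw [map_sub, _root_.map_one, map_zero, ← hx]; exact h
    have : (X - 1 : ℝ[X]) = 0 := RatFunc.algebraMap_injective ℝ h0
    exact Polynomial.X_sub_C_ne_zero (1 : ℝ) (by simpa using this)
  set a : RatFunc ℝ := x - ((k : RatFunc ℝ) + 1) - (x - 1)⁻¹ with ha
  have key : (charmatrix ((headlessThinSpider k).lapMatrix ℝ)).map φ =
      Matrix.fromBlocks
        ((x - ((k : RatFunc ℝ) + 1)) • (1 : Matrix (Fin k) (Fin k) (RatFunc ℝ)) +
          Matrix.of (fun _ _ => (1 : RatFunc ℝ)))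
        (1 : Matrix (Fin k) (Fin k) (RatFunc ℝ)) (1 : Matrix (Fin k) (Fin k) (RatFunc ℝ))
        ((x - 1) • (1 : Matrix (Fin k) (Fin k) (RatFunc ℝ))) := by
    rw [lap_eq (by omega), charmatrix_fromBlocks]
    ext (i|i) (j|j) <;> by_cases h : i = j <;>
      simp [h, Matrix.map_apply, charmatrix, Matrix.one_apply, Matrix.diagonal, allOnes,
        Matrix.smul_apply, hx, map_natCast, Polynomial.algebraMap_eq] <;> ring
  rw [show ((headlessThinSpider k).lapMatrix ℝ).charpoly
      = (charmatrix ((headlessThinSpider k).lapMatrix ℝ)).det from rfl,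
    RingHom.map_det, RingHom.mapMatrix_apply, key]
  haveI : Invertible (x - 1) := invertibleOfNonzero hx1
  haveI : Invertible ((x - 1) • (1 : Matrix (Fin k) (Fin k) (RatFunc ℝ))) :=
    ⟨(x - 1)⁻¹ • 1, by rw [smul_mul_smul_comm, Matrix.mul_one, inv_mul_cancel₀ hx1, one_smul],
      by rw [smul_mul_smul_comm, Matrix.mul_one, mul_inv_cancel₀ hx1, one_smul]⟩
  rw [Matrix.det_fromBlocks₂₂]
  have hinv : (⅟((x - 1) • (1 : Matrix (Fin k) (Fin k) (RatFunc ℝ)))) = (x - 1)⁻¹ • 1 := by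
    apply invOf_eq_right_inv
    rw [smul_mul_smul_comm, Matrix.mul_one, mul_inv_cancel₀ hx1, one_smul]
  rw [hinv]
  have hsimp : ((x - ((k : RatFunc ℝ) + 1)) • (1 : Matrix (Fin k) (Fin k) (RatFunc ℝ)) +
      Matrix.of (fun _ _ => (1 : RatFunc ℝ))) -
      (1 : Matrix (Fin k) (Fin k) (RatFunc ℝ)) * ((x - 1)⁻¹ • 1) * 1 =
      a • 1 + Matrix.of (fun _ _ => (1 : RatFunc ℝ)) := by
    rw [Matrix.one_mul, Matrix.mul_one, ha, add_sub_right_comm, ← sub_smul]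
  rw [hsimp, det_smul_one_add_allOnes hk, Matrix.det_smul, Matrix.det_one, mul_one,
    Fintype.card_fin]
  have hrhs : φ (X * (X - C (2 : ℝ)) * (X ^ 2 - C ((k : ℝ) + 2) * X + C (k : ℝ)) ^ (k - 1)) =
      x * (x - 2) * (x ^ 2 - ((k : RatFunc ℝ) + 2) * x + (k : RatFunc ℝ)) ^ (k - 1) := by
    simp [_root_.map_mul, map_sub, map_add, map_pow, ← hx, Polynomial.algebraMap_eq, map_natCast,
      map_ofNat]
  rw [hrhs]
  have h2 : (x - 1) * a = x ^ 2 - ((k : RatFunc ℝ) + 2) * x + (k : RatFunc ℝ) := by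
    rw [ha]
    field_simp
    ring
  have h3 : (x - 1) * (a + (k : RatFunc ℝ)) = x * (x - 2) := by
    rw [mul_add, h2]; ring
  rw [aux_pow _ _ _ (by omega : 1 ≤ k), h2, h3]
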